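/- Let P = t^{-4} − 2t^{-3} + 3t^{-2} − 4t^{-1} + 4 − 4t + 3t^2 − 2t^3 + t^4 in ℤ[t, t^{-1}], and for an integer n set V_n = (−t)^n · P + 1 ∈ ℤ[t, t^{-1}]. Then the breadth of V_n (the maximal exponent of t occurring with nonzero coefficient in V_n minus the minimal such exponent) equals |n| + 4 if |n| > 4, and equals 8 if |n| ≤ 4. -/

import Mathlib

open LaurentPolynomial
set_option maxHeartbeats 1000000

/-- coefficient function of P -/
def pc (m : ℤ) : ℤ :=
  if (-4:ℤ) = m then 1 else if (-3:ℤ) = m then -2 else if (-2:ℤ) = m then 3 else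
  if (-1:ℤ) = m then -4 else if (0:ℤ) = m then 4 else if (1:ℤ) = m then -4 else
  if (2:ℤ) = m then 3 else if (3:ℤ) = m then -2 else if (4:ℤ) = m then 1 else 0

noncomputable def kanenobuP : LaurentPolynomial ℤ :=
  T (-4) - 2 * T (-3) + 3 * T (-2) - 4 * T (-1) + 4 - 4 * T 1 + 3 * T 2 - 2 * T 3 + T 4

lemma P_eq : kanenobuP = AddMonoidAlgebra.single (-4) 1 - AddMonoidAlgebra.single (-3) 2
    + AddMonoidAlgebra.single (-2) 3
    - AddMonoidAlgebra.single (-1) 4 + AddMonoidAlgebra.single 0 4 - AddMonoidAlgebra.single 1 4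
    + AddMonoidAlgebra.single 2 3
    - AddMonoidAlgebra.single 3 2 + AddMonoidAlgebra.single 4 1 := by
  rw [kanenobuP]
  rw [show (2 : LaurentPolynomial ℤ) * T (-3) = AddMonoidAlgebra.single (-3) 2 by
    rw [show (2 : LaurentPolynomial ℤ) = C 2 from (map_ofNat C 2).symm, ← single_eq_C_mul_T]]
  rw [show (3 : LaurentPolynomial ℤ) * T (-2) = AddMonoidAlgebra.single (-2) 3 by
    rw [show (3 : LaurentPolynomial ℤ) = C 3 from (map_ofNat C 3).symm, ← single_eq_C_mul_T]]
  rw [show (4 : LaurentPolynomial ℤ) * T (-1) = AddMonoidAlgebra.single (-1) 4 by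
    rw [show (4 : LaurentPolynomial ℤ) = C 4 from (map_ofNat C 4).symm, ← single_eq_C_mul_T]]
  rw [show (4 : LaurentPolynomial ℤ) * T 1 = AddMonoidAlgebra.single 1 4 by
    rw [show (4 : LaurentPolynomial ℤ) = C 4 from (map_ofNat C 4).symm, ← single_eq_C_mul_T]]
  rw [show (3 : LaurentPolynomial ℤ) * T 2 = AddMonoidAlgebra.single 2 3 by
    rw [show (3 : LaurentPolynomial ℤ) = C 3 from (map_ofNat C 3).symm, ← single_eq_C_mul_T]]
  rw [show (2 : LaurentPolynomial ℤ) * T 3 = AddMonoidAlgebra.single 3 2 by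
    rw [show (2 : LaurentPolynomial ℤ) = C 2 from (map_ofNat C 2).symm, ← single_eq_C_mul_T]]
  rw [show (4 : LaurentPolynomial ℤ) = AddMonoidAlgebra.single 0 4 by
    rw [show (4 : LaurentPolynomial ℤ) = C 4 from (map_ofNat C 4).symm]; rfl]
  rfl

lemma P_apply (m : ℤ) : kanenobuP.coeff m = pc m := by
  rw [P_eq, pc]
  repeat first
    | rw [AddMonoidAlgebra.coeff_add]
    | rw [AddMonoidAlgebra.coeff_sub]
    | rw [AddMonoidAlgebra.coeff_single]
    | rw [Finsupp.add_apply]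
    | rw [Finsupp.sub_apply]
    | rw [Finsupp.single_apply]
  split_ifs <;> omega

noncomputable def kanenobuV (n : ℤ) : LaurentPolynomial ℤ :=
  ((n.negOnePow : ℤˣ) : ℤ) • (LaurentPolynomial.T n * kanenobuP) + 1

lemma V_apply (n k : ℤ) : (kanenobuV n).coeff k
    = ((n.negOnePow : ℤˣ) : ℤ) * pc (k - n) + (if (0:ℤ) = k then 1 else 0) := by
  rw [kanenobuV, AddMonoidAlgebra.coeff_add, Finsupp.add_apply, AddMonoidAlgebra.coeff_smul,
    Finsupp.smul_apply]
  rw [show (T n : LaurentPolynomial ℤ) = AddMonoidAlgebra.single n 1 from rfl]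
  rw [AddMonoidAlgebra.coeff_single_mul_apply, AddMonoidAlgebra.one_def,
    AddMonoidAlgebra.coeff_single, Finsupp.single_apply,
    P_apply, smul_eq_mul, one_mul, neg_add_eq_sub]

lemma V_support (n : ℤ) :
    (kanenobuV n).coeff.support = insert (0:ℤ) (Finset.Icc (n-4) (n+4)) := by
  have hε : ((n.negOnePow : ℤˣ) : ℤ) = 1 ∨ ((n.negOnePow : ℤˣ) : ℤ) = -1 := by
    rcases Int.units_eq_one_or (n.negOnePow) with h | h <;> rw [h] <;> simp
  ext k
  rw [Finsupp.mem_support_iff, V_apply, Finset.mem_insert, Finset.mem_Icc]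
  by_cases hk : k = 0
  · subst hk
    rw [if_pos rfl]
    constructor
    · intro _; exact Or.inl rfl
    · intro _
      rcases hε with h | h <;> rw [h]
      · have : pc (0 - n) ≠ -1 := by unfold pc; split_ifs <;> omega
        rw [one_mul]; omega
      · have hne : n ≠ 4 ∧ n ≠ -4 := by
          constructor <;> rintro rfl
          · rw [Int.negOnePow_even _ ⟨2, by norm_num⟩] at h; simp at h
          · rw [Int.negOnePow_even _ ⟨-2, by norm_num⟩] at h; simp at h
        have : pc (0 - n) ≠ 1 := by unfold pc; split_ifs <;> omega
        rw [neg_one_mul]; omega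
  · rw [if_neg (fun h => hk h.symm), add_zero]
    have hpc : pc (k - n) ≠ 0 ↔ (n - 4 ≤ k ∧ k ≤ n + 4) := by
      unfold pc; split_ifs <;> omega
    constructor
    · intro h
      refine Or.inr (hpc.mp fun h0 => h ?_)
      rw [h0, mul_zero]
    · rintro (rfl | h)
      · exact absurd rfl hk
      · have := hpc.mpr h
        rcases hε with hh | hh <;> rw [hh]
        · rw [one_mul]; omega
        · rw [neg_one_mul]; omega

/-- The breadth of `V n` (maximal exponent of `t` with nonzero coefficient minus the
minimal such exponent) is `|n| + 4` if `|n| > 4` and `8` if `|n| ≤ 4`. -/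
theorem kanenobu_jones_breadth (n : ℤ) :
    ∃ h : (kanenobuV n).coeff.support.Nonempty,
      (kanenobuV n).coeff.support.max' h - (kanenobuV n).coeff.support.min' h =
        if 4 < |n| then |n| + 4 else 8 := by
  have hs := V_support n
  have hne : (kanenobuV n).coeff.support.Nonempty := by
    rw [hs]; exact Finset.insert_nonempty _ _
  refine ⟨hne, ?_⟩
  have hmax : (kanenobuV n).coeff.support.max' hne = max 0 (n+4) := by
    apply le_antisymm
    · apply Finset.max'_le
      intro y hy
      rw [hs, Finset.mem_insert, Finset.mem_Icc] at hy
      rcases hy with rfl | hy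
      · exact le_max_left _ _
      · exact le_max_of_le_right hy.2
    · refine Finset.le_max' _ _ ?_
      rw [hs, Finset.mem_insert, Finset.mem_Icc]
      rcases le_total (n+4) 0 with h | h
      · rw [max_eq_left h]; exact Or.inl rfl
      · rw [max_eq_right h]; right; omega
  have hmin : (kanenobuV n).coeff.support.min' hne = min 0 (n-4) := by
    apply le_antisymm
    · refine Finset.min'_le _ _ ?_
      rw [hs, Finset.mem_insert, Finset.mem_Icc]
      rcases le_total 0 (n-4) with h | h
      · rw [min_eq_left h]; exact Or.inl rfl
      · rw [min_eq_right h]; right; omega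
    · apply Finset.le_min'
      intro y hy
      rw [hs, Finset.mem_insert, Finset.mem_Icc] at hy
      rcases hy with rfl | hy
      · exact min_le_left _ _
      · exact le_trans (min_le_right _ _) hy.1
  rw [hmax, hmin]
  rcases abs_cases n with ⟨h1, h2⟩ | ⟨h1, h2⟩ <;> rw [h1] <;> split_ifs <;> omega
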